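/- Let |I_m| denote the number of involutions of size m. Then n!·(|I_{n−2}|/(n−2)! − 2·|I_{n−1}|/(n−1)!)/(n·|I_n|) → 1 as n → ∞; equivalently, the n-th Taylor coefficient of x(x−2)·e^{x+x²/2} at 0 is asymptotically equivalent to n·|I_n|/n!. -/

import Mathlib

/-- `ConsecOcc p π i`: the word `π(i) π(i+1) … π(i+r-1)` (positions `0`-indexed)
is order-isomorphic to the pattern word `p 0, …, p (r-1)`. -/
def ConsecOcc {n r : ℕ} (p : Fin r → ℕ) (π : Equiv.Perm (Fin n)) (i : ℕ) : Prop :=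
  ∃ h : i + r ≤ n, ∀ j k : Fin r,
    (π ⟨i + j.val, by have := j.isLt; omega⟩ < π ⟨i + k.val, by have := k.isLt; omega⟩
      ↔ p j < p k)

/-- The number of consecutive occurrences of the pattern `p` in `π`. -/
noncomputable def occCount {n r : ℕ} (p : Fin r → ℕ) (π : Equiv.Perm (Fin n)) : ℕ :=
  Nat.card {i : ℕ // ConsecOcc p π i}

/-- `π` has no consecutive occurrence of any pattern in `ps`. -/
def AvoidsAll {n r : ℕ} (ps : List (Fin r → ℕ)) (π : Equiv.Perm (Fin n)) : Prop :=
  ∀ p ∈ ps, ∀ i, ¬ ConsecOcc p π i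

-- Total number of consecutive occurrences of `p` over all size-`n` permutations satisfying `P`.
open scoped Classical in
noncomputable def totOcc {n r : ℕ} (p : Fin r → ℕ) (P : Equiv.Perm (Fin n) → Prop) : ℕ :=
  ∑ π : Equiv.Perm (Fin n), if P π then occCount p π else 0

/-- The number of size-`n` permutations satisfying `P`. -/
noncomputable def classCard (n : ℕ) (P : Equiv.Perm (Fin n) → Prop) : ℕ :=
  Nat.card {π : Equiv.Perm (Fin n) // P π}

def p123 : Fin 3 → ℕ := ![1,2,3]
def p132 : Fin 3 → ℕ := ![1,3,2]
def p213 : Fin 3 → ℕ := ![2,1,3]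
def p231 : Fin 3 → ℕ := ![2,3,1]
def p312 : Fin 3 → ℕ := ![3,1,2]
def p321 : Fin 3 → ℕ := ![3,2,1]

/-- The number of involutions of `{1,…,n}`. -/
noncomputable def involCard (n : ℕ) : ℕ :=
  Nat.card {π : Equiv.Perm (Fin n) // π * π = 1}

section InvolAux
set_option linter.unusedSectionVars false
open Equiv Equiv.Perm
variable {α β : Type*} [Fintype α] [DecidableEq α] [Fintype β] [DecidableEq β]

lemma permCongr_mul (e : α ≃ β) (f g : Equiv.Perm α) :
    e.permCongr (f * g) = e.permCongr f * e.permCongr g := by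
  ext x; simp [Equiv.permCongr_apply]

set_option linter.unusedSectionVars false

lemma card_inv_congr (e : α ≃ β) :
    Fintype.card {f : Equiv.Perm α // f * f = 1} =
      Fintype.card {g : Equiv.Perm β // g * g = 1} := by
  apply Fintype.card_congr
  refine Equiv.subtypeEquiv e.permCongr (fun f => ?_)
  constructor
  · intro h
    rw [← permCongr_mul, h]; ext x; simp [Equiv.permCongr_apply]
  · intro h
    apply e.permCongr.injective
    rw [permCongr_mul, h]
    ext x; simp [Equiv.permCongr_apply]

lemma card_inv_eq_involCard : Fintype.card {f : Equiv.Perm α // f * f = 1} =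
    involCard (Fintype.card α) := by
  rw [involCard, Nat.card_eq_fintype_card]
  exact card_inv_congr (Fintype.equivFin α)

lemma involCard_zero : involCard 0 = 1 := by
  rw [involCard, Nat.card_eq_fintype_card]; decide

lemma involCard_one : involCard 1 = 1 := by
  rw [involCard, Nat.card_eq_fintype_card]; decide

lemma fix_mem_iff {a : α} {f : Equiv.Perm α} (hfa : f a = a) (x : α) :
    x ≠ a ↔ f x ≠ a := by
  constructor
  · intro hx hc; exact hx (f.injective (hc.trans hfa.symm))
  · intro hx hc; rw [hc] at hx; exact hx hfa

/-- Involutions fixing `a` correspond to involutions of the complement. -/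
def fixEquiv (a : α) :
    {f : Equiv.Perm α // f * f = 1 ∧ f a = a} ≃
      {g : Equiv.Perm {x : α // x ≠ a} // g * g = 1} where
  toFun f := ⟨Equiv.Perm.subtypePerm f.1 (fun x => (fix_mem_iff f.2.2 x).symm), by
    rw [Equiv.Perm.subtypePerm_mul]
    have := f.2.1
    ext x
    simp [Equiv.Perm.subtypePerm_apply, this]⟩
  invFun g := ⟨Equiv.Perm.ofSubtype g.1, by
    rw [← map_mul, g.2, map_one],
    Equiv.Perm.ofSubtype_apply_of_not_mem g.1 (by simp)⟩
  left_inv f := by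
    apply Subtype.ext
    show Equiv.Perm.ofSubtype ((f : Equiv.Perm α).subtypePerm (fun x => (fix_mem_iff f.2.2 x).symm)) = (f : Equiv.Perm α)
    exact Equiv.Perm.ofSubtype_subtypePerm _ (fun x hx hc => by
      rw [hc] at hx; exact hx f.2.2)
  right_inv g := by
    apply Subtype.ext
    ext x
    dsimp only
    rw [Equiv.Perm.subtypePerm_apply]
    simp [Equiv.Perm.ofSubtype_apply_coe]

section Swap
variable {a b : α} (hab : a ≠ b)

lemma swap_mem_iff {f : Equiv.Perm α} (hf : f * f = 1) (hfa : f a = b) (x : α) :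
    (x ≠ a ∧ x ≠ b) ↔ (f x ≠ a ∧ f x ≠ b) := by
  have hfb : f b = a := by
    have := congrArg f hfa.symm
    rwa [← Equiv.Perm.mul_apply, hf, Equiv.Perm.one_apply] at this
  constructor
  · rintro ⟨h1, h2⟩
    exact ⟨fun hc => h2 (f.injective (hc.trans hfb.symm)),
      fun hc => h1 (f.injective (hc.trans hfa.symm))⟩
  · rintro ⟨h1, h2⟩
    exact ⟨fun hc => h2 (by rw [hc]; exact hfa), fun hc => h1 (by rw [hc]; exact hfb)⟩

lemma swap_comm_ofSubtype (g : Equiv.Perm {x : α // x ≠ a ∧ x ≠ b}) :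
    Commute (Equiv.swap a b) (Equiv.Perm.ofSubtype g) := by
  unfold Commute SemiconjBy
  ext x
  by_cases hxa : x = a
  · have h1 : Equiv.Perm.ofSubtype g a = a :=
      Equiv.Perm.ofSubtype_apply_of_not_mem g (fun h => h.1 rfl)
    have h2 : Equiv.Perm.ofSubtype g b = b :=
      Equiv.Perm.ofSubtype_apply_of_not_mem g (fun h => h.2 rfl)
    rw [hxa]
    simp [h1, h2]
  by_cases hxb : x = b
  · have h1 : Equiv.Perm.ofSubtype g a = a :=
      Equiv.Perm.ofSubtype_apply_of_not_mem g (fun h => h.1 rfl)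
    have h2 : Equiv.Perm.ofSubtype g b = b :=
      Equiv.Perm.ofSubtype_apply_of_not_mem g (fun h => h.2 rfl)
    rw [hxb]
    simp [h1, h2, Equiv.swap_apply_right]
  · have hmem : x ≠ a ∧ x ≠ b := ⟨hxa, hxb⟩
    have h1 : Equiv.swap a b x = x := Equiv.swap_apply_of_ne_of_ne hxa hxb
    have h2 : Equiv.Perm.ofSubtype g x = ((g ⟨x, hmem⟩ : {x : α // x ≠ a ∧ x ≠ b}) : α) :=
      Equiv.Perm.ofSubtype_apply_of_mem g hmem
    simp only [Equiv.Perm.mul_apply, h1, h2]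
    exact Equiv.swap_apply_of_ne_of_ne (g ⟨x, hmem⟩).2.1 (g ⟨x, hmem⟩).2.2

/-- Involutions sending `a` to `b ≠ a` correspond to involutions of the complement of `{a,b}`. -/
def swapEquiv :
    {f : Equiv.Perm α // f * f = 1 ∧ f a = b} ≃
      {g : Equiv.Perm {x : α // x ≠ a ∧ x ≠ b} // g * g = 1} where
  toFun f := ⟨(f : Equiv.Perm α).subtypePerm (fun x => (swap_mem_iff f.2.1 f.2.2 x).symm), by
    rw [Equiv.Perm.subtypePerm_mul]
    have := f.2.1
    ext x
    simp [Equiv.Perm.subtypePerm_apply, this]⟩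
  invFun g := ⟨Equiv.swap a b * Equiv.Perm.ofSubtype g.1, by
    rw [((swap_comm_ofSubtype g.1).symm).mul_mul_mul_comm, Equiv.swap_mul_self, ← map_mul, g.2,
      map_one, one_mul], by
    have h1 : Equiv.Perm.ofSubtype g.1 a = a :=
      Equiv.Perm.ofSubtype_apply_of_not_mem g.1 (fun h => h.1 rfl)
    simp [h1]⟩
  left_inv f := by
    obtain ⟨f, hf, hfa⟩ := f
    have hfb : f b = a := by
      have := congrArg f hfa.symm
      rwa [← Equiv.Perm.mul_apply, hf, Equiv.Perm.one_apply] at this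
    apply Subtype.ext
    dsimp only
    ext x
    set O := Equiv.Perm.ofSubtype (f.subtypePerm (p := fun x => x ≠ a ∧ x ≠ b) (fun x => (swap_mem_iff hf hfa x).symm)) with hO
    by_cases hxa : x = a
    · have h1 : O a = a := Equiv.Perm.ofSubtype_apply_of_not_mem _ (fun h => h.1 rfl)
      rw [hxa]
      simp [h1, hfa]
    by_cases hxb : x = b
    · have h1 : O b = b := Equiv.Perm.ofSubtype_apply_of_not_mem _ (fun h => h.2 rfl)
      rw [hxb]
      simp [h1, hfb, Equiv.swap_apply_right]
    · have hmem : x ≠ a ∧ x ≠ b := ⟨hxa, hxb⟩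
      have hfm : f x ≠ a ∧ f x ≠ b := (swap_mem_iff hf hfa x).mp hmem
      have h2 : O x = f x := by
        rw [hO, Equiv.Perm.ofSubtype_apply_of_mem (f.subtypePerm (p := fun x => x ≠ a ∧ x ≠ b) (fun x => (swap_mem_iff hf hfa x).symm)) hmem,
          Equiv.Perm.subtypePerm_apply]
      simp only [Equiv.Perm.mul_apply, h2]
      exact Equiv.swap_apply_of_ne_of_ne hfm.1 hfm.2
  right_inv g := by
    apply Subtype.ext
    ext x
    dsimp only
    rw [Equiv.Perm.subtypePerm_apply]
    have h2 : Equiv.Perm.ofSubtype (g : Equiv.Perm {x : α // x ≠ a ∧ x ≠ b}) (x : α)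
        = (((g : Equiv.Perm {x : α // x ≠ a ∧ x ≠ b}) x : {x : α // x ≠ a ∧ x ≠ b}) : α) :=
      Equiv.Perm.ofSubtype_apply_coe (g : Equiv.Perm {x : α // x ≠ a ∧ x ≠ b}) x
    simp only [Equiv.Perm.mul_apply, h2]
    exact Equiv.swap_apply_of_ne_of_ne ((g : Equiv.Perm _) x).2.1 ((g : Equiv.Perm _) x).2.2

end Swap

set_option maxHeartbeats 1000000 in
lemma involCard_recur (n : ℕ) :
    involCard (n + 2) = involCard (n + 1) + (n + 1) * involCard n := by
  have key : Fintype.card {f : Equiv.Perm (Fin (n+2)) // f * f = 1}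
      = ∑ p : Fin (n+2), Fintype.card {f : Equiv.Perm (Fin (n+2)) // f * f = 1 ∧ f 0 = p} := by
    rw [← Fintype.card_sigma]
    exact Fintype.card_congr
      (((Equiv.sigmaFiberEquiv
          (fun f : {f : Equiv.Perm (Fin (n+2)) // f * f = 1} => f.1 0)).symm).trans
        (Equiv.sigmaCongrRight (fun p =>
          Equiv.subtypeSubtypeEquivSubtypeInter
            (fun f : Equiv.Perm (Fin (n+2)) => f * f = 1) (fun f => f 0 = p))))
  have h0 : Fintype.card {f : Equiv.Perm (Fin (n+2)) // f * f = 1 ∧ f 0 = 0}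
      = involCard (n + 1) := by
    rw [Fintype.card_congr (fixEquiv (0 : Fin (n+2))), card_inv_eq_involCard]
    congr 1
    simp [Fintype.card_subtype_compl]
  have hp : ∀ p : Fin (n+2), p ≠ 0 →
      Fintype.card {f : Equiv.Perm (Fin (n+2)) // f * f = 1 ∧ f 0 = p} = involCard n := by
    intro p hpne
    rw [Fintype.card_congr (swapEquiv (a := (0 : Fin (n+2))) (b := p)), card_inv_eq_involCard]
    congr 1
    have e : {x : Fin (n+2) // x ≠ 0 ∧ x ≠ p} ≃ {x : Fin (n+2) // ¬(x = 0 ∨ x = p)} :=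
      Equiv.subtypeEquivRight (fun x => by tauto)
    rw [Fintype.card_congr e, Fintype.card_subtype_compl]
    have h2 : Fintype.card {x : Fin (n+2) // x = 0 ∨ x = p} = 2 := by
      have e2 : {x : Fin (n+2) // x = 0 ∨ x = p} ≃ ({0, p} : Finset (Fin (n+2))) :=
        Equiv.subtypeEquivRight (fun x => by simp)
      rw [Fintype.card_congr e2, Fintype.card_coe,
        Finset.card_insert_of_notMem (by simpa using (Ne.symm hpne)), Finset.card_singleton]
    rw [h2]
    simp
  rw [involCard, Nat.card_eq_fintype_card, key,
    ← Finset.add_sum_erase _ _ (Finset.mem_univ (0 : Fin (n+2))), h0]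
  congr 1
  rw [Finset.sum_congr rfl (fun p hmem => hp p (Finset.ne_of_mem_erase hmem)),
    Finset.sum_const, Finset.card_erase_of_mem (Finset.mem_univ _), Finset.card_univ]
  simp [mul_comm]

lemma involCard_pos : ∀ n, 1 ≤ involCard n := by
  have h : ∀ n, 1 ≤ involCard n ∧ 1 ≤ involCard (n+1) := by
    intro n
    induction n with
    | zero => exact ⟨involCard_zero.ge, involCard_one.ge⟩
    | succ m ih =>
      refine ⟨ih.2, ?_⟩
      rw [involCard_recur]
      have := ih.2
      omega
  exact fun n => (h n).1

lemma invol_bounds : ∀ n : ℕ, 1 ≤ n →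
    Real.sqrt (n+1) * (involCard n : ℝ) ≤ (involCard (n+1) : ℝ) ∧
    (involCard (n+1) : ℝ) ≤ (1 + Real.sqrt (n+1)) * (involCard n : ℝ) := by
  intro n hn
  induction n, hn using Nat.le_induction with
  | base =>
    have h2 : involCard 2 = 2 := by
      rw [involCard_recur, involCard_zero, involCard_one]
    rw [involCard_one, h2]
    have hs : Real.sqrt 2 ^ 2 = 2 := Real.sq_sqrt (by norm_num)
    have hs0 : (0:ℝ) ≤ Real.sqrt 2 := Real.sqrt_nonneg 2
    norm_num
    nlinarith
  | succ m hm ih =>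
    obtain ⟨ihl, ihr⟩ := ih
    set s := Real.sqrt ((m:ℝ)+1) with hsdef
    set t := Real.sqrt ((m:ℝ)+2) with htdef
    have hs2 : s ^ 2 = (m:ℝ) + 1 := Real.sq_sqrt (by positivity)
    have ht2 : t ^ 2 = (m:ℝ) + 2 := Real.sq_sqrt (by positivity)
    have hs1 : 1 ≤ s := by
      have hm0 : (0:ℝ) ≤ (m:ℝ) := Nat.cast_nonneg m
      have := Real.sqrt_le_sqrt (show (1:ℝ) ≤ (m:ℝ)+1 by linarith)
      rwa [Real.sqrt_one] at this
    have ht0 : 0 ≤ t := Real.sqrt_nonneg _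
    have hst : s ≤ t := Real.sqrt_le_sqrt (by linarith)
    have hrec : (involCard (m+2) : ℝ) = (involCard (m+1) : ℝ) + ((m:ℝ)+1) * involCard m := by
      rw [involCard_recur]; push_cast; ring
    have hIm : (1:ℝ) ≤ (involCard m : ℝ) := by exact_mod_cast involCard_pos m
    have hIm1 : (1:ℝ) ≤ (involCard (m+1) : ℝ) := by exact_mod_cast involCard_pos (m+1)
    have key : (1 + s) * t ≤ 1 + s + s^2 := by
      nlinarith [sq_nonneg ((1+s)*t - (1+s+s^2)), sq_nonneg s, sq_nonneg (s*t - s*s - 1)]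
    have hcast : ((m:ℝ) + 1 + 1) = (m:ℝ) + 2 := by ring
    constructor
    · push_cast
      rw [hcast, ← htdef, hrec]
      have hpos : (0:ℝ) < 1 + s := by linarith
      rw [← mul_le_mul_iff_right₀ hpos]
      have h1 : ((m:ℝ)+1) * (involCard (m+1) : ℝ) ≤ (1+s) * (((m:ℝ)+1) * involCard m) := by
        nlinarith
      have h2 : (1+s) * t * (involCard (m+1) : ℝ) ≤ (1+s+s^2) * (involCard (m+1) : ℝ) :=
        mul_le_mul_of_nonneg_right key (by linarith)
      nlinarith
    · push_cast
      rw [hcast, ← htdef, hrec]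
      have h3 : s * (s * (involCard m : ℝ)) ≤ s * (involCard (m+1) : ℝ) :=
        mul_le_mul_of_nonneg_left ihl (by linarith)
      nlinarith

lemma sqrt_tendsto : Filter.Tendsto (fun n : ℕ => Real.sqrt n) Filter.atTop Filter.atTop := by
  rw [Filter.tendsto_atTop]
  intro b
  filter_upwards [Filter.eventually_ge_atTop (Nat.ceil (b^2) )] with n hn
  have : (b^2 : ℝ) ≤ n := le_trans (Nat.le_ceil _) (by exact_mod_cast hn)
  calc b ≤ Real.sqrt (b^2) := by
        rcases le_or_gt b 0 with h | h
        · exact h.trans (Real.sqrt_nonneg _)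
        · rw [Real.sqrt_sq h.le]
    _ ≤ Real.sqrt n := Real.sqrt_le_sqrt this

lemma inv_sqrt_tendsto :
    Filter.Tendsto (fun n : ℕ => 1 / Real.sqrt n) Filter.atTop (nhds 0) := by
  simpa [Function.comp_def, one_div] using
    tendsto_inv_atTop_zero.comp sqrt_tendsto

lemma ratio_tendsto :
    Filter.Tendsto (fun n : ℕ => (involCard (n-1) : ℝ) / involCard n) Filter.atTop (nhds 0) := by
  apply squeeze_zero' (g := fun n : ℕ => 1 / Real.sqrt n)
  · filter_upwards with n
    positivity
  · filter_upwards [Filter.eventually_ge_atTop 2] with n hn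
    obtain ⟨m, rfl⟩ : ∃ m, n = m + 2 := ⟨n - 2, by omega⟩
    have hb := (invol_bounds (m+1) (by omega)).1
    have hpos : (0:ℝ) < (involCard (m+2) : ℝ) := by
      exact_mod_cast involCard_pos (m+2)
    have hs : (0:ℝ) < Real.sqrt ((m+1:ℕ)+1) := by
      apply Real.sqrt_pos.mpr; push_cast; linarith [Nat.cast_nonneg (α := ℝ) m]
    have h1 : Real.sqrt ((m+1:ℕ)+1) * (involCard (m+1) : ℝ) ≤ (involCard (m+2) : ℝ) := by
      exact_mod_cast hb
    rw [show (m+2) - 1 = m + 1 by omega, show ((m+2:ℕ):ℝ) = ((m+1:ℕ):ℝ)+1 by push_cast; ring]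
    rw [div_le_div_iff₀ hpos hs]
    nlinarith [h1]
  · exact inv_sqrt_tendsto


end InvolAux

theorem stmt16 :
    Filter.Tendsto (fun n : ℕ =>
        (Nat.factorial n : ℝ) *
          ((involCard (n - 2) : ℝ) / Nat.factorial (n - 2)
            - 2 * (involCard (n - 1) : ℝ) / Nat.factorial (n - 1))
          / (n * involCard n))
      Filter.atTop (nhds 1) := by
  have h : Filter.Tendsto (fun n : ℕ => 1 - 3 * ((involCard (n-1) : ℝ) / involCard n))
      Filter.atTop (nhds 1) := by
    have := (ratio_tendsto.const_mul (3:ℝ)).const_sub 1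
    simpa using this
  apply h.congr'
  filter_upwards [Filter.eventually_ge_atTop 2] with n hn
  obtain ⟨m, rfl⟩ : ∃ m, n = m + 2 := ⟨n - 2, by omega⟩
  rw [show (m+2) - 2 = m by omega, show (m+2) - 1 = m + 1 by omega]
  have hf2 : (Nat.factorial (m+2) : ℝ) = ((m:ℝ)+2) * ((m:ℝ)+1) * (Nat.factorial m : ℝ) := by
    rw [Nat.factorial_succ, Nat.factorial_succ]; push_cast; ring
  have hf1 : (Nat.factorial (m+1) : ℝ) = ((m:ℝ)+1) * (Nat.factorial m : ℝ) := by
    rw [Nat.factorial_succ]; push_cast; ring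
  have hrec : (involCard (m+2) : ℝ) = (involCard (m+1) : ℝ) + ((m:ℝ)+1) * involCard m := by
    rw [involCard_recur]; push_cast; ring
  have hI2 : (involCard (m+2) : ℝ) ≠ 0 := by
    have := involCard_pos (m+2); positivity
  have hfm : (Nat.factorial m : ℝ) ≠ 0 := by positivity
  have hm1 : ((m:ℝ)+1) ≠ 0 := by positivity
  have hm2 : ((m:ℝ)+2) ≠ 0 := by positivity
  rw [hf2, hf1, hrec]
  have hB : (0:ℝ) < (involCard (m+1) : ℝ) := by
    have := involCard_pos (m+1); exact_mod_cast Nat.lt_of_lt_of_le Nat.zero_lt_one this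
  have hA : (0:ℝ) < (involCard m : ℝ) := by
    have := involCard_pos m; exact_mod_cast Nat.lt_of_lt_of_le Nat.zero_lt_one this
  have hC : ((involCard (m+1) : ℝ) + ((m:ℝ)+1) * involCard m) ≠ 0 := by positivity
  push_cast
  field_simp
  ring
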